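/- For integers 0 ≤ j ≤ d < k with 2k ≤ n, the alternating sum ∑_{i=j}^{d} (-1)^i C(k-i, d-i)^2 · C(k-j, k-i) · C(n-i-j, k-i) equals (-1)^j · C(k-j, d-j) · C(n-d-j, d-j) · C(n-d-j, k-d). -/

import Mathlib

open Finset

lemma keyT_stmt_2 (D : ℕ) : ∀ M N : ℕ, D ≤ M → M + D ≤ N →
    ∑ m ∈ range (D+1), ((-1:ℤ)^m * (D.choose m : ℤ) * ((N-m).choose (M-m) : ℤ))
      = ((N-D).choose M : ℤ) := by
  induction D with
  | zero => intro M N _ _; simp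
  | succ D IH =>
    intro M N hDM hMN
    have hA := IH (M-1) (N-1) (by omega) (by omega)
    have hU : ∑ m ∈ range (D+1), ((-1:ℤ)^m * (D.choose (m+1) : ℤ) * (((N-1)-m).choose ((M-1)-m) : ℤ))
        = (N.choose M : ℤ) - ((N-D).choose M : ℤ) := by
      have hS := IH M N (by omega) (by omega)
      rw [Finset.sum_range_succ'] at hS
      simp only [pow_zero, Nat.choose_zero_right, Nat.sub_zero, Nat.cast_one, one_mul] at hS
      rw [Finset.sum_range_succ, Nat.choose_succ_self]
      have e : ∀ m ∈ range D, (-1:ℤ)^m * (D.choose (m+1) : ℤ) * (((N-1)-m).choose ((M-1)-m) : ℤ)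
          = -((-1:ℤ)^(m+1) * (D.choose (m+1) : ℤ) * ((N-(m+1)).choose (M-(m+1)) : ℤ)) := by
        intro m _
        have h1 : N - (m+1) = (N-1) - m := by omega
        have h2 : M - (m+1) = (M-1) - m := by omega
        rw [h1, h2, pow_succ]; ring
      rw [Finset.sum_congr rfl e, Finset.sum_neg_distrib]
      push_cast
      linarith [hS]
    rw [Finset.sum_range_succ']
    have e : ∀ m ∈ range (D+1), (-1:ℤ)^(m+1) * ((D+1).choose (m+1) : ℤ) * ((N-(m+1)).choose (M-(m+1)) : ℤ)
        = -((-1:ℤ)^m * (D.choose m : ℤ) * (((N-1)-m).choose ((M-1)-m) : ℤ))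
          + -((-1:ℤ)^m * (D.choose (m+1) : ℤ) * (((N-1)-m).choose ((M-1)-m) : ℤ)) := by
      intro m _
      have h1 : N - (m+1) = (N-1) - m := by omega
      have h2 : M - (m+1) = (M-1) - m := by omega
      rw [h1, h2, Nat.choose_succ_succ, pow_succ]
      push_cast; ring
    rw [Finset.sum_congr rfl e, Finset.sum_add_distrib, Finset.sum_neg_distrib,
      Finset.sum_neg_distrib, hA, hU]
    obtain ⟨a, ha⟩ : ∃ a, N - D = a + 1 := ⟨N - D - 1, by omega⟩
    obtain ⟨b, hb⟩ : ∃ b, M = b + 1 := ⟨M - 1, by omega⟩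
    have h3 : N - 1 - D = a := by omega
    have h4 : M - 1 = b := by omega
    have h5 : N - (D+1) = a := by omega
    rw [h3, h4, h5, ha, hb, Nat.choose_succ_succ]
    push_cast; simp; ring

theorem stmt_2 (n k d j : ℕ) (hjd : j ≤ d) (hdk : d < k) (hkn : 2 * k ≤ n) :
    ∑ i ∈ Finset.Icc j d,
        ((-1 : ℤ) ^ i * (Nat.choose (k - i) (d - i) : ℤ) ^ 2 *
          (Nat.choose (k - j) (k - i) : ℤ) * (Nat.choose (n - i - j) (k - i) : ℤ)) =
      (-1 : ℤ) ^ j * (Nat.choose (k - j) (d - j) : ℤ) *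
        (Nat.choose (n - d - j) (d - j) : ℤ) * (Nat.choose (n - d - j) (k - d) : ℤ) := by
  set K := k - j with hK
  set D := d - j with hD
  set N := n - 2*j with hN
  rw [← Finset.Ico_add_one_right_eq_Icc, Finset.sum_Ico_eq_sum_range]
  have hrange : d + 1 - j = D + 1 := by omega
  rw [hrange]
  have e : ∀ m ∈ range (D+1),
      (-1:ℤ)^(j+m) * ((k-(j+m)).choose (d-(j+m)) : ℤ)^2 * ((k-j).choose (k-(j+m)) : ℤ) *
        ((n-(j+m)-j).choose (k-(j+m)) : ℤ)
      = ((-1:ℤ)^j * (K.choose D : ℤ) * ((N-D).choose (K-D) : ℤ)) *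
        ((-1:ℤ)^m * (D.choose m : ℤ) * ((N-m).choose (D-m) : ℤ)) := by
    intro m hm
    rw [Finset.mem_range] at hm
    have hmD : m ≤ D := by omega
    have e1 : k - (j+m) = K - m := by omega
    have e2 : d - (j+m) = D - m := by omega
    have e3 : n - (j+m) - j = N - m := by omega
    rw [e1, e2, e3]
    have e4 : K.choose (K - m) = K.choose m := Nat.choose_symm (by omega)
    rw [e4]
    have h1 : (K.choose D : ℤ) * (D.choose m : ℤ) = (K.choose m : ℤ) * ((K-m).choose (D-m) : ℤ) := by
      exact_mod_cast congrArg (Nat.cast : ℕ → ℤ) (Nat.choose_mul (n := K) hmD)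
    have h2 : ((N-m).choose (K-m) : ℤ) * ((K-m).choose (D-m) : ℤ)
        = ((N-m).choose (D-m) : ℤ) * ((N-D).choose (K-D) : ℤ) := by
      have := Nat.choose_mul (n := N - m) (show D - m ≤ K - m by omega)
      have r1 : N - m - (D - m) = N - D := by omega
      have r2 : K - m - (D - m) = K - D := by omega
      rw [r1, r2] at this
      exact_mod_cast congrArg (Nat.cast : ℕ → ℤ) this
    rw [pow_add]
    linear_combination ((-1:ℤ)^j * (-1:ℤ)^m * (K.choose m : ℤ) * ((K-m).choose (D-m) : ℤ)) * h2
      - ((-1:ℤ)^j * (-1:ℤ)^m * ((N-m).choose (D-m) : ℤ) * ((N-D).choose (K-D) : ℤ)) * h1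
  rw [Finset.sum_congr rfl e, ← Finset.mul_sum, keyT_stmt_2 D D N le_rfl (by omega)]
  have r1 : n - d - j = N - D := by omega
  have r2 : k - d = K - D := by omega
  rw [r1, r2]
  ring
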